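/- arXiv:1208.0235 — 5 statements merged into one kernel-verified Lean document; each statement's English description precedes it below -/
import Mathlib

section
/- Let A be a nontrivial unital C*-algebra and let θ be an irrational real number. Suppose u and v are unitary elements of A satisfying the θ-commutation relation u·v = exp(2πiθ)·(v·u). Then the spectrum of u (as an element of A, over ℂ) is the full unit circle {z ∈ ℂ : ‖z‖ = 1}, and likewise the spectrum of v is the full unit circle. -/
open scoped Real Pointwise

-- density of {m + nθ} in ℝ
lemma dense_int_add_zsmul (θ : ℝ) (hθ : Irrational θ) :
    Dense {x : ℝ | ∃ m n : ℤ, x = m + n * θ} := by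
  set D : AddSubgroup ℝ :=
    { carrier := {x : ℝ | ∃ m n : ℤ, x = m + n * θ}
      zero_mem' := ⟨0, 0, by simp⟩
      add_mem' := by
        rintro a b ⟨m, n, rfl⟩ ⟨m', n', rfl⟩
        exact ⟨m + m', n + n', by push_cast; ring⟩
      neg_mem' := by
        rintro a ⟨m, n, rfl⟩
        exact ⟨-m, -n, by push_cast; ring⟩ }
  rcases D.dense_or_cyclic with h | ⟨a, ha⟩
  · exact h
  · exfalso
    have h1 : (1 : ℝ) ∈ D := ⟨1, 0, by simp⟩
    have h2 : θ ∈ D := ⟨0, 1, by simp⟩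
    rw [ha, AddSubgroup.mem_closure_singleton] at h1 h2
    obtain ⟨m, hm⟩ := h1
    obtain ⟨n, hn⟩ := h2
    have hm0 : (m : ℝ) ≠ 0 := by
      intro h
      simp [zsmul_eq_mul, h] at hm
    refine hθ ⟨(n : ℚ) / (m : ℚ), ?_⟩
    have : (m : ℝ) * θ = n := by
      rw [zsmul_eq_mul] at hm hn
      have h' : (m : ℝ) * θ = n * ((m : ℝ) * a) := by rw [← hn]; ring
      rwa [hm, mul_one] at h'
    push_cast
    field_simp
    linarith [this]

lemma mem_closure_orbit (θ : ℝ) (hθ : Irrational θ) (z w : ℂ) (hz : ‖z‖ = 1) (hw : ‖w‖ = 1) :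
    w ∈ closure {x : ℂ | ∃ n : ℤ, Complex.exp (2 * Real.pi * Complex.I * θ) ^ n * z = x} := by
  have hz0 : z ≠ 0 := by intro h; simp [h] at hz
  set f : ℝ → ℂ := fun t => Complex.exp (2 * Real.pi * Complex.I * t) * z with hf_def
  have hf : Continuous f := by fun_prop
  set t₀ : ℝ := (w / z).arg / (2 * Real.pi) with ht₀
  have hwz : ‖w / z‖ = 1 := by
    rw [norm_div, hz, hw]; norm_num
  have hft : f t₀ = w := by
    have h2π : (2 * Real.pi : ℂ) ≠ 0 := by
      simp [Real.pi_ne_zero]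
    have : (2 * Real.pi * Complex.I * t₀ : ℂ) = (w / z).arg * Complex.I := by
      push_cast [ht₀]
      field_simp
    rw [hf_def]
    simp only [this]
    have := Complex.norm_mul_exp_arg_mul_I (w / z)
    rw [hwz] at this
    simp only [Complex.ofReal_one, one_mul] at this
    rw [this, div_mul_cancel₀ _ hz0]
  have himg : f '' {x : ℝ | ∃ m n : ℤ, x = m + n * θ} ⊆
      {x : ℂ | ∃ n : ℤ, Complex.exp (2 * Real.pi * Complex.I * θ) ^ n * z = x} := by
    rintro x ⟨t, ⟨m, n, rfl⟩, rfl⟩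
    refine ⟨n, ?_⟩
    rw [hf_def]
    simp only
    rw [← Complex.exp_int_mul]
    have harg : (2 * (Real.pi : ℂ) * Complex.I * ((m : ℂ) + (n : ℂ) * (θ : ℂ))) =
        (m : ℂ) * (2 * Real.pi * Complex.I) + (n : ℂ) * (2 * Real.pi * Complex.I * θ) := by ring
    push_cast
    rw [harg, Complex.exp_add, Complex.exp_int_mul_two_pi_mul_I, one_mul]
  have : w ∈ closure (f '' {x : ℝ | ∃ m n : ℤ, x = m + n * θ}) := by
    have hd := dense_int_add_zsmul θ hθ
    have : f t₀ ∈ f '' closure {x : ℝ | ∃ m n : ℤ, x = m + n * θ} :=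
      ⟨t₀, by rw [hd.closure_eq]; trivial, rfl⟩
    rw [← hft]
    exact image_closure_subset_closure_image hf this
  exact closure_mono himg this

lemma spectrum_eq_sphere_of_smul_eq {A : Type*} [CStarAlgebra A] [Nontrivial A]
    (θ : ℝ) (hθ : Irrational θ) (a : unitary A)
    (h : Complex.exp (2 * Real.pi * Complex.I * θ) • spectrum ℂ (a : A) = spectrum ℂ (a : A)) :
    spectrum ℂ (a : A) = Metric.sphere (0 : ℂ) 1 := by
  set lam : ℂ := Complex.exp (2 * Real.pi * Complex.I * θ) with hlam
  have hlam0 : lam ≠ 0 := Complex.exp_ne_zero _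
  set S : Set ℂ := spectrum ℂ (a : A) with hS
  have hsub : S ⊆ Metric.sphere (0 : ℂ) 1 := Unitary.spectrum_subset_circle a
  refine Set.Subset.antisymm hsub ?_
  have hmul : ∀ x ∈ S, lam * x ∈ S := by
    intro x hx
    rw [← h]
    exact ⟨x, hx, rfl⟩
  have hdiv : ∀ x ∈ S, lam⁻¹ * x ∈ S := by
    intro x hx
    rw [← h] at hx
    obtain ⟨y, hy, rfl⟩ := hx
    simpa [smul_eq_mul, inv_mul_cancel_left₀ hlam0] using hy
  have horb : ∀ x ∈ S, ∀ n : ℤ, lam ^ n * x ∈ S := by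
    intro x hx n
    induction n using Int.induction_on with
    | zero => simpa using hx
    | succ k ih =>
      have := hmul _ ih
      rwa [← mul_assoc, mul_comm lam, ← zpow_add_one₀ hlam0] at this
    | pred k ih =>
      have := hdiv _ ih
      rwa [← mul_assoc, mul_comm lam⁻¹, ← zpow_sub_one₀ hlam0] at this
  intro w hw
  obtain ⟨z, hz⟩ := spectrum.nonempty (a : A)
  have hz1 : ‖z‖ = 1 := mem_sphere_zero_iff_norm.mp (hsub hz)
  have hw1 : ‖w‖ = 1 := mem_sphere_zero_iff_norm.mp hw
  have hcl : closure {x : ℂ | ∃ n : ℤ, lam ^ n * z = x} ⊆ S := by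
    have hScl : IsClosed S := spectrum.isClosed _
    rw [← hScl.closure_eq]
    refine closure_mono ?_
    rintro x ⟨n, rfl⟩
    exact horb z hz n
  exact hcl (mem_closure_orbit θ hθ z w hz1 hw1)

/-- If `u, v` are unitaries in a nontrivial unital C*-algebra satisfying the
`θ`-commutation relation with `θ` irrational, then the spectrum of each of `u` and `v`
is the full unit circle. -/
theorem spectrum_eq_unit_circle_of_irrational_commutation
    {A : Type*} [CStarAlgebra A] [Nontrivial A]
    (θ : ℝ) (hθ : Irrational θ) (u v : unitary A)
    (huv : (u : A) * v = Complex.exp (2 * Real.pi * Complex.I * θ) • ((v : A) * u)) :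
    spectrum ℂ (u : A) = Metric.sphere (0 : ℂ) 1 ∧
    spectrum ℂ (v : A) = Metric.sphere (0 : ℂ) 1 := by
  set lam : ℂ := Complex.exp (2 * Real.pi * Complex.I * θ) with hlam
  have hlam0 : lam ≠ 0 := Complex.exp_ne_zero _
  set g : ℂˣ := Units.mk0 lam hlam0 with hg
  set U : Aˣ := Unitary.toUnits u with hU
  set V : Aˣ := Unitary.toUnits v with hV
  have hUu : (U : A) = (u : A) := rfl
  have hVv : (V : A) = (v : A) := rfl
  constructor
  · refine spectrum_eq_sphere_of_smul_eq θ hθ u ?_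
    have key : (u : A) = lam • ((V : A) * (u : A) * ((V⁻¹ : Aˣ) : A)) := by
      have h1 := congrArg (· * ((V⁻¹ : Aˣ) : A)) huv
      rw [mul_assoc, ← hVv, V.mul_inv, mul_one, smul_mul_assoc, mul_assoc] at h1
      rw [mul_assoc]
      exact h1
    calc lam • spectrum ℂ (u : A)
        = lam • spectrum ℂ ((V : A) * (u : A) * ((V⁻¹ : Aˣ) : A)) := by
          rw [spectrum.units_conjugate]
      _ = g • spectrum ℂ ((V : A) * (u : A) * ((V⁻¹ : Aˣ) : A)) := rfl
      _ = spectrum ℂ (g • ((V : A) * (u : A) * ((V⁻¹ : Aˣ) : A))) := by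
          rw [spectrum.unit_smul_eq_smul]
      _ = spectrum ℂ (u : A) := by
          rw [hg]
          simp only [Units.smul_def, Units.val_mk0]
          rw [← key]
  · refine spectrum_eq_sphere_of_smul_eq θ hθ v ?_
    have key : (v : A) = lam • (((U⁻¹ : Aˣ) : A) * (v : A) * (U : A)) := by
      have h1 := congrArg (fun x => ((U⁻¹ : Aˣ) : A) * x) huv
      rw [← mul_assoc, ← hUu, U.inv_mul, one_mul, mul_smul_comm, ← mul_assoc] at h1
      exact h1
    calc lam • spectrum ℂ (v : A)
        = lam • spectrum ℂ (((U⁻¹ : Aˣ) : A) * (v : A) * (U : A)) := by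
          rw [spectrum.units_conjugate']
      _ = g • spectrum ℂ (((U⁻¹ : Aˣ) : A) * (v : A) * (U : A)) := rfl
      _ = spectrum ℂ (g • (((U⁻¹ : Aˣ) : A) * (v : A) * (U : A))) := by
          rw [spectrum.unit_smul_eq_smul]
      _ = spectrum ℂ (v : A) := by
          rw [hg]
          simp only [Units.smul_def, Units.val_mk0]
          rw [← key]
end

section
/- Let A be a unital C*-algebra, let θ be an irrational real number, and let u, v be unitary elements of A satisfying the θ-commutation relation u·v = exp(2πiθ)·(v·u). Let φ : A → ℂ be a linear functional such that φ(1) = 1, φ(star(a)·a) is a nonnegative real number for every a ∈ A, and φ is invariant under conjugation by u and by v, i.e. φ(u·a·star(u)) = φ(a) and φ(v·a·star(v)) = φ(a) for all a ∈ A. Then for all integers m, n with (m, n) ≠ (0, 0) one has φ(u^m · v^n) = 0, where integer powers are taken in the unitary group. (Uniqueness of the canonical trace on the quantum torus.) -/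
open scoped Real

lemma key_comm {A : Type*} [CStarAlgebra A] (c : ℂ) (hc : c ≠ 0) (u v : unitary A)
    (h : (u : A) * v = c • ((v : A) * u)) (n : ℤ) :
    (u : A) * ((v ^ n : unitary A) : A) = c ^ n • (((v ^ n : unitary A) : A) * u) := by
  have h2 : star (v : A) * (v : A) = 1 := Unitary.coe_star_mul_self v
  have h3 : (v : A) * star (v : A) = 1 := Unitary.coe_mul_star_self v
  have hstar : (u : A) * star (v : A) = c⁻¹ • (star (v : A) * u) := by
    have h1 := congrArg (fun x => star (v : A) * x * star (v : A)) h
    simp only [mul_smul_comm, smul_mul_assoc, mul_assoc] at h1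
    rw [h3, mul_one, ← mul_assoc, h2, one_mul] at h1
    rw [h1, smul_smul, inv_mul_cancel₀ hc, one_smul]
  induction n using Int.induction_on with
  | zero => simp
  | succ k ih =>
    have hz : (v ^ ((k : ℤ) + 1) : unitary A) = v ^ (k : ℤ) * v := by
      rw [zpow_add_one]
    rw [hz, Submonoid.coe_mul, ← mul_assoc, ih, smul_mul_assoc, mul_assoc, h,
      mul_smul_comm, smul_smul, ← zpow_add_one₀ hc]
    simp only [mul_assoc]
  | pred k ih =>
    have hz : (v ^ (-(k : ℤ) - 1) : unitary A) = v ^ (-(k : ℤ)) * v⁻¹ := by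
      rw [zpow_sub_one]
    have hinv : ((v⁻¹ : unitary A) : A) = star (v : A) := rfl
    rw [hz, Submonoid.coe_mul, hinv, ← mul_assoc, ih, smul_mul_assoc, mul_assoc, hstar,
      mul_smul_comm, smul_smul, ← zpow_sub_one₀ hc]
    simp only [mul_assoc]

/-- **Uniqueness of the canonical trace on the quantum torus.**  Let `u, v` be unitaries
in a unital C*-algebra satisfying the `θ`-commutation relation with `θ` irrational, and
let `φ` be a state invariant under conjugation by `u` and by `v`.  Then `φ` vanishes on
all monomials `u^m v^n` with `(m, n) ≠ (0, 0)`. -/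
theorem state_invariant_vanishes_on_monomials
    {A : Type*} [CStarAlgebra A]
    (θ : ℝ) (hθ : Irrational θ) (u v : unitary A)
    (huv : (u : A) * v = Complex.exp (2 * Real.pi * Complex.I * θ) • ((v : A) * u))
    (φ : A →ₗ[ℂ] ℂ)
    (hφ1 : φ 1 = 1)
    (hφpos : ∀ a : A, ∃ r : ℝ, 0 ≤ r ∧ φ (star a * a) = r)
    (hφu : ∀ a : A, φ ((u : A) * a * star (u : A)) = φ a)
    (hφv : ∀ a : A, φ ((v : A) * a * star (v : A)) = φ a) :
    ∀ m n : ℤ, (m, n) ≠ (0, 0) →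
      φ (((u ^ m : unitary A) : A) * ((v ^ n : unitary A) : A)) = 0 := by
  set c : ℂ := Complex.exp (2 * Real.pi * Complex.I * θ) with hc_def
  have hc : c ≠ 0 := Complex.exp_ne_zero _
  have hck : ∀ k : ℤ, k ≠ 0 → c ^ k ≠ 1 := by
    intro k hk hcon
    rw [hc_def, ← Complex.exp_int_mul] at hcon
    obtain ⟨j, hj⟩ := Complex.exp_eq_one_iff.mp hcon
    have h2π : (2 : ℂ) * Real.pi * Complex.I ≠ 0 :=
      mul_ne_zero (mul_ne_zero two_ne_zero (Complex.ofReal_ne_zero.mpr Real.pi_ne_zero))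
        Complex.I_ne_zero
    have hkj : (k : ℂ) * θ = j := by
      have hmul : ((k : ℂ) * θ) * (2 * Real.pi * Complex.I)
          = (j : ℂ) * (2 * Real.pi * Complex.I) := by linear_combination hj
      exact mul_right_cancel₀ h2π hmul
    have hkθ : (k : ℝ) * θ = j := by exact_mod_cast hkj
    have hθeq : θ = (j : ℝ) / (k : ℝ) := by
      field_simp
      linarith [hkθ]
    exact hθ ⟨(j : ℚ) / (k : ℚ), by push_cast; rw [hθeq]⟩
  intro m n hmn
  set X : A := ((u ^ m : unitary A) : A) * ((v ^ n : unitary A) : A) with hX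
  by_cases hn : n ≠ 0
  · have key := key_comm c hc u v huv n
    have hcomm : (u : A) * ((u ^ m : unitary A) : A) = ((u ^ m : unitary A) : A) * u := by
      have h' : (u * u ^ m : unitary A) = (u ^ m * u : unitary A) := by group
      calc (u : A) * ((u ^ m : unitary A) : A) = ((u * u ^ m : unitary A) : A) := rfl
        _ = ((u ^ m * u : unitary A) : A) := by rw [h']
        _ = ((u ^ m : unitary A) : A) * u := rfl
    have h1 : (u : A) * X * star (u : A) = c ^ n • X := by
      have e1 : (u : A) * X = ((u ^ m : unitary A) : A) * ((u : A) * ((v ^ n : unitary A) : A)) := by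
        rw [hX, ← mul_assoc, hcomm, mul_assoc]
      rw [e1, key, mul_smul_comm, smul_mul_assoc]
      congr 1
      simp only [mul_assoc]
      rw [Unitary.mul_star_self_of_mem u.prop, mul_one, hX]
    have h2 : φ X = c ^ n * φ X :=
      calc φ X = φ ((u : A) * X * star (u : A)) := (hφu X).symm
        _ = c ^ n * φ X := by rw [h1, map_smul, smul_eq_mul]
    have h0 : (c ^ n - 1) * φ X = 0 := by linear_combination -h2
    rcases mul_eq_zero.mp h0 with h | h
    · exact absurd (sub_eq_zero.mp h) (hck n hn)
    · exact h
  · push_neg at hn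
    have hm : m ≠ 0 := fun hm0 => hmn (by simp [hm0, hn])
    have hvu : (v : A) * u = c⁻¹ • ((u : A) * v) := by
      rw [huv, smul_smul, inv_mul_cancel₀ hc, one_smul]
    have key := key_comm c⁻¹ (inv_ne_zero hc) v u hvu m
    have hcomm : (v : A) * ((v ^ n : unitary A) : A) = ((v ^ n : unitary A) : A) * v := by
      have h' : (v * v ^ n : unitary A) = (v ^ n * v : unitary A) := by group
      calc (v : A) * ((v ^ n : unitary A) : A) = ((v * v ^ n : unitary A) : A) := rfl
        _ = ((v ^ n * v : unitary A) : A) := by rw [h']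
        _ = ((v ^ n : unitary A) : A) * v := rfl
    have h1 : (v : A) * X * star (v : A) = (c⁻¹) ^ m • X := by
      have e1 : (v : A) * X = (c⁻¹) ^ m • (((u ^ m : unitary A) : A) * ((v : A) * ((v ^ n : unitary A) : A))) := by
        rw [hX, ← mul_assoc, key, smul_mul_assoc, mul_assoc]
      rw [e1, smul_mul_assoc]
      congr 1
      rw [hcomm]
      simp only [mul_assoc]
      rw [Unitary.mul_star_self_of_mem v.prop, mul_one, hX]
    have h2 : φ X = (c⁻¹) ^ m * φ X :=
      calc φ X = φ ((v : A) * X * star (v : A)) := (hφv X).symm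
        _ = (c⁻¹) ^ m * φ X := by rw [h1, map_smul, smul_eq_mul]
    have hne : (c⁻¹) ^ m ≠ 1 := by
      rw [inv_zpow, ← zpow_neg]
      exact hck (-m) (by omega)
    have h0 : ((c⁻¹) ^ m - 1) * φ X = 0 := by linear_combination -h2
    rcases mul_eq_zero.mp h0 with h | h
    · exact absurd (sub_eq_zero.mp h) hne
    · exact h
end

section
/- Let A be a unital C*-algebra, let θ be a real number, and let u, v be unitary elements of A satisfying the θ-commutation relation u·v = exp(2πiθ)·(v·u). Then for all integers p, q, r, s with p·s − q·r = 1, the elements u^p·v^q and u^r·v^s (integer powers taken in the unitary group) satisfy the same commutation relation: (u^p·v^q)·(u^r·v^s) = exp(2πiθ)·((u^r·v^s)·(u^p·v^q)). (Well-definedness of the SL(2,ℤ) endomorphisms of the quantum torus.) -/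
open scoped Real

lemma unitary_zpow_comm {A : Type*} [CStarAlgebra A] (w : unitary A) (x : A)
    (c : ℂ) (hc : c ≠ 0) (h : (w : A) * x = c • (x * (w : A))) (n : ℤ) :
    ((w ^ n : unitary A) : A) * x = c ^ n • (x * ((w ^ n : unitary A) : A)) := by
  have hw1 : (w : A) * star (w : A) = 1 := Unitary.mul_star_self_of_mem w.2
  have hw2 : star (w : A) * (w : A) = 1 := Unitary.star_mul_self_of_mem w.2
  have hstar : star (w : A) * x = c⁻¹ • (x * star (w : A)) := by
    have h1 : x * (w : A) = c⁻¹ • ((w : A) * x) := by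
      rw [h, smul_smul, inv_mul_cancel₀ hc, one_smul]
    calc star (w : A) * x
        = star (w : A) * x * ((w : A) * star (w : A)) := by rw [hw1, mul_one]
      _ = star (w : A) * (x * (w : A)) * star (w : A) := by
          simp only [mul_assoc]
      _ = star (w : A) * (c⁻¹ • ((w : A) * x)) * star (w : A) := by rw [h1]
      _ = c⁻¹ • (star (w : A) * (w : A) * (x * star (w : A))) := by
          simp only [mul_smul_comm, smul_mul_assoc, mul_assoc]
      _ = c⁻¹ • (x * star (w : A)) := by rw [hw2, one_mul]
  induction n using Int.induction_on with
  | zero => simp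
  | succ k ih =>
      have hco : ((w ^ ((k : ℤ) + 1) : unitary A) : A)
          = ((w ^ (k : ℤ) : unitary A) : A) * (w : A) := by
        rw [zpow_add_one]; rfl
      rw [hco, mul_assoc, h, mul_smul_comm, ← mul_assoc, ih, smul_mul_assoc,
        smul_smul, mul_assoc]
      congr 1
      rw [zpow_add_one₀ hc, mul_comm]
  | pred k ih =>
      have hco : ((w ^ (-(k : ℤ) - 1) : unitary A) : A)
          = ((w ^ (-(k : ℤ)) : unitary A) : A) * star (w : A) := by
        rw [zpow_sub_one]; rfl
      rw [hco, mul_assoc, hstar, mul_smul_comm, ← mul_assoc, ih, smul_mul_assoc,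
        smul_smul, mul_assoc]
      congr 1
      rw [zpow_sub_one₀ hc, mul_comm]

lemma unitary_zpow_zpow_comm {A : Type*} [CStarAlgebra A] (θ : ℝ) (u v : unitary A)
    (huv : (u : A) * v = Complex.exp (2 * Real.pi * Complex.I * θ) • ((v : A) * u))
    (m n : ℤ) :
    ((u ^ m : unitary A) : A) * ((v ^ n : unitary A) : A) =
      (Complex.exp (2 * Real.pi * Complex.I * θ)) ^ (m * n) •
        (((v ^ n : unitary A) : A) * ((u ^ m : unitary A) : A)) := by
  set c := Complex.exp (2 * Real.pi * Complex.I * θ) with hc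
  have hcne : c ≠ 0 := Complex.exp_ne_zero _
  have h1 : ((u ^ m : unitary A) : A) * (v : A) = c ^ m • ((v : A) * ((u ^ m : unitary A) : A)) :=
    unitary_zpow_comm u (v : A) c hcne huv m
  have h2 : (v : A) * ((u ^ m : unitary A) : A)
      = (c ^ m)⁻¹ • (((u ^ m : unitary A) : A) * (v : A)) := by
    rw [h1, smul_smul, inv_mul_cancel₀ (zpow_ne_zero _ hcne), one_smul]
  have h3 := unitary_zpow_comm v ((u ^ m : unitary A) : A) (c ^ m)⁻¹
    (inv_ne_zero (zpow_ne_zero _ hcne)) h2 n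
  rw [h3, smul_smul, ← zpow_neg, ← zpow_mul, ← zpow_add₀ hcne]
  simp

/-- **Well-definedness of the `SL(2,ℤ)` endomorphisms of the quantum torus.**  If
unitaries `u, v` satisfy the `θ`-commutation relation, then for any integers
`p, q, r, s` with `p·s − q·r = 1` the elements `u^p v^q` and `u^r v^s` satisfy the same
commutation relation. -/
theorem sl2_monomials_commutation
    {A : Type*} [CStarAlgebra A] (θ : ℝ) (u v : unitary A)
    (huv : (u : A) * v = Complex.exp (2 * Real.pi * Complex.I * θ) • ((v : A) * u))
    (p q r s : ℤ) (hdet : p * s - q * r = 1) :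
    ((u ^ p * v ^ q : unitary A) : A) * ((u ^ r * v ^ s : unitary A) : A) =
      Complex.exp (2 * Real.pi * Complex.I * θ) •
        (((u ^ r * v ^ s : unitary A) : A) * ((u ^ p * v ^ q : unitary A) : A)) := by
  set c := Complex.exp (2 * Real.pi * Complex.I * θ) with hc
  have hcne : c ≠ 0 := Complex.exp_ne_zero _
  have key : ∀ a b g d : ℤ,
      ((u ^ a : unitary A) : A) * ((v ^ b : unitary A) : A) *
        (((u ^ g : unitary A) : A) * ((v ^ d : unitary A) : A)) =
      c ^ (-(g * b)) • (((u ^ (a + g) : unitary A) : A) * ((v ^ (b + d) : unitary A) : A)) := by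
    intro a b g d
    have hM := unitary_zpow_zpow_comm θ u v huv g b
    have hvb : ((v ^ b : unitary A) : A) * ((u ^ g : unitary A) : A)
        = c ^ (-(g * b)) • (((u ^ g : unitary A) : A) * ((v ^ b : unitary A) : A)) := by
      rw [hM, smul_smul, zpow_neg, inv_mul_cancel₀ (zpow_ne_zero _ hcne), one_smul]
    have hcu : ((u ^ (a + g) : unitary A) : A)
        = ((u ^ a : unitary A) : A) * ((u ^ g : unitary A) : A) := by
      rw [zpow_add]; rfl
    have hcv : ((v ^ (b + d) : unitary A) : A)
        = ((v ^ b : unitary A) : A) * ((v ^ d : unitary A) : A) := by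
      rw [zpow_add]; rfl
    calc ((u ^ a : unitary A) : A) * ((v ^ b : unitary A) : A) *
          (((u ^ g : unitary A) : A) * ((v ^ d : unitary A) : A))
        = ((u ^ a : unitary A) : A) * (((v ^ b : unitary A) : A) * ((u ^ g : unitary A) : A)) *
          ((v ^ d : unitary A) : A) := by simp only [mul_assoc]
      _ = ((u ^ a : unitary A) : A) *
          (c ^ (-(g * b)) • (((u ^ g : unitary A) : A) * ((v ^ b : unitary A) : A))) *
          ((v ^ d : unitary A) : A) := by rw [hvb]
      _ = c ^ (-(g * b)) • (((u ^ a : unitary A) : A) * ((u ^ g : unitary A) : A) *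
          (((v ^ b : unitary A) : A) * ((v ^ d : unitary A) : A))) := by
          simp only [mul_smul_comm, smul_mul_assoc, mul_assoc]
      _ = c ^ (-(g * b)) •
          (((u ^ (a + g) : unitary A) : A) * ((v ^ (b + d) : unitary A) : A)) := by
          rw [hcu, hcv]
  have hL : ((u ^ p * v ^ q : unitary A) : A) = ((u ^ p : unitary A) : A) * ((v ^ q : unitary A) : A) := rfl
  have hR : ((u ^ r * v ^ s : unitary A) : A) = ((u ^ r : unitary A) : A) * ((v ^ s : unitary A) : A) := rfl
  rw [hL, hR, key p q r s, key r s p q, smul_smul]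
  rw [add_comm r p, add_comm s q]
  congr 1
  rw [← zpow_one_add₀ hcne]
  congr 1
  nlinarith [hdet]
end

section
/- Let G and H be additive subgroups of ℝ with 1 ∈ G and 1 ∈ H, and let η : G → H be an order-preserving additive group homomorphism (η(x + y) = η(x) + η(y), and x ≤ y implies η(x) ≤ η(y), comparing elements as real numbers) such that η(1) = 1. Then η(g) = g (as real numbers) for every g ∈ G. -/
/-- An order-preserving additive group homomorphism between additive subgroups of `ℝ`
both containing `1`, which sends `1` to `1`, is the identity (as real numbers). -/
theorem orderPreserving_hom_fixing_one_eq_id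
    (G H : AddSubgroup ℝ) (h1G : (1 : ℝ) ∈ G) (h1H : (1 : ℝ) ∈ H)
    (η : G → H)
    (hadd : ∀ x y : G, (η (x + y) : ℝ) = (η x : ℝ) + (η y : ℝ))
    (hmono : ∀ x y : G, (x : ℝ) ≤ (y : ℝ) → (η x : ℝ) ≤ (η y : ℝ))
    (hone : (η ⟨1, h1G⟩ : ℝ) = 1) :
    ∀ g : G, (η g : ℝ) = (g : ℝ) := by
  -- package η as an additive monoid hom to ℝ
  let f : G →+ ℝ :=
    { toFun := fun g => (η g : ℝ)
      map_zero' := by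
        have h := hadd 0 0
        simp only [add_zero] at h
        linarith
      map_add' := hadd }
  have hf : ∀ g : G, f g = (η g : ℝ) := fun g => rfl
  have key : ∀ (g : G) (n : ℤ), f (n • g) = n * (η g : ℝ) := by
    intro g n
    rw [map_zsmul]
    simp [hf, zsmul_eq_mul]
  -- rational comparison lemmas
  have hle : ∀ (g : G) (q : ℚ), (q : ℝ) ≤ (g : ℝ) → (q : ℝ) ≤ (η g : ℝ) := by
    intro g q hq
    have hn : (0 : ℝ) < (q.den : ℝ) := by positivity
    have hineq : ((q.num • (⟨1, h1G⟩ : G) : G) : ℝ) ≤ (((q.den : ℤ) • g : G) : ℝ) := by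
      push_cast [zsmul_eq_mul]
      rw [Rat.cast_def] at hq
      rw [div_le_iff₀ hn] at hq
      linarith [mul_comm ((g:ℝ)) ((q.den:ℝ))]
    have := hmono _ _ hineq
    rw [← hf, ← hf, key, key, hone, mul_one] at this
    rw [Rat.cast_def, div_le_iff₀ hn]
    calc ((q.num : ℝ)) ≤ (q.den : ℤ) * (η g : ℝ) := this
      _ = (η g : ℝ) * (q.den : ℝ) := by push_cast; ring
  have hge : ∀ (g : G) (q : ℚ), (g : ℝ) ≤ (q : ℝ) → (η g : ℝ) ≤ (q : ℝ) := by
    intro g q hq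
    have hn : (0 : ℝ) < (q.den : ℝ) := by positivity
    have hineq : (((q.den : ℤ) • g : G) : ℝ) ≤ ((q.num • (⟨1, h1G⟩ : G) : G) : ℝ) := by
      push_cast [zsmul_eq_mul]
      rw [Rat.cast_def] at hq
      rw [le_div_iff₀ hn] at hq
      linarith [mul_comm ((g:ℝ)) ((q.den:ℝ))]
    have := hmono _ _ hineq
    rw [← hf, ← hf, key, key, hone, mul_one] at this
    rw [Rat.cast_def, le_div_iff₀ hn]
    calc (η g : ℝ) * (q.den : ℝ) = (q.den : ℤ) * (η g : ℝ) := by push_cast; ring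
      _ ≤ (q.num : ℝ) := this
  intro g
  by_contra hne
  rcases lt_or_gt_of_ne hne with h | h
  · obtain ⟨q, hq1, hq2⟩ := exists_rat_btwn h
    exact absurd (hle g q hq2.le) (not_le.mpr hq1)
  · obtain ⟨q, hq1, hq2⟩ := exists_rat_btwn h
    exact absurd (hge g q hq1.le) (not_le.mpr hq2)
end

section
/- Let G and H be additive subgroups of ℝ, let p be a real number with p > 0 and p ∈ G, let r be an integer, and let η : G → H be an order-preserving additive group homomorphism (additive, and x ≤ y implies η(x) ≤ η(y), comparing elements as real numbers) such that η(p) = r·p. Then η(g) = r·g (as real numbers) for every g ∈ G. -/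
/-- An order-preserving additive group homomorphism between additive subgroups of `ℝ`
which sends some positive `p ∈ G` to `r·p` (with `r` an integer) is multiplication by
`r` (as real numbers). -/
theorem orderPreserving_hom_scaling
    (G H : AddSubgroup ℝ) (p : ℝ) (hp : 0 < p) (hpG : p ∈ G) (r : ℤ)
    (η : G → H)
    (hadd : ∀ x y : G, (η (x + y) : ℝ) = (η x : ℝ) + (η y : ℝ))
    (hmono : ∀ x y : G, (x : ℝ) ≤ (y : ℝ) → (η x : ℝ) ≤ (η y : ℝ))
    (hpval : (η ⟨p, hpG⟩ : ℝ) = (r : ℝ) * p) :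
    ∀ g : G, (η g : ℝ) = (r : ℝ) * (g : ℝ) := by
  have h0 : (η 0 : ℝ) = 0 := by
    have h := hadd 0 0
    rw [add_zero] at h
    linarith
  let ψ : G →+ ℝ := { toFun := fun x => (η x : ℝ), map_zero' := h0, map_add' := hadd }
  have hz : ∀ (n : ℤ) (x : G), (η (n • x) : ℝ) = (n : ℝ) * (η x : ℝ) := by
    intro n x
    have h := map_zsmul ψ n x
    rw [zsmul_eq_mul] at h
    exact h
  have hcoe : ∀ (n : ℤ) (x : G), ((n • x : G) : ℝ) = (n : ℝ) * (x : ℝ) := by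
    intro n x; push_cast [zsmul_eq_mul]; ring
  have key : ∀ (m n : ℤ) (g : G), (m : ℝ) * p ≤ (n : ℝ) * (g : ℝ) →
      (m : ℝ) * ((r : ℝ) * p) ≤ (n : ℝ) * (η g : ℝ) := by
    intro m n g h
    have h2 := hmono (m • (⟨p, hpG⟩ : G)) (n • g) (by rw [hcoe, hcoe]; exact h)
    rwa [hz, hz, hpval] at h2
  have key2 : ∀ (m n : ℤ) (g : G), (n : ℝ) * (g : ℝ) ≤ (m : ℝ) * p →
      (n : ℝ) * (η g : ℝ) ≤ (m : ℝ) * ((r : ℝ) * p) := by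
    intro m n g h
    have h2 := hmono (n • g) (m • (⟨p, hpG⟩ : G)) (by rw [hcoe, hcoe]; exact h)
    rwa [hz, hz, hpval] at h2
  have hr0 : (0 : ℝ) ≤ (r : ℝ) * p := by
    have := hmono 0 ⟨p, hpG⟩ (le_of_lt hp)
    rw [h0, hpval] at this; linarith
  intro g
  rcases eq_or_lt_of_le hr0 with hr | hr
  · -- r = 0 case
    have hrz : (r : ℝ) = 0 := by
      rcases mul_eq_zero.mp hr.symm with h | h
      · exact h
      · exact absurd h (ne_of_gt hp)
    rw [hrz, zero_mul]
    obtain ⟨m, hm⟩ := exists_int_gt ((g : ℝ) / p)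
    have hub : (g : ℝ) ≤ (m : ℝ) * p := by
      have := (div_lt_iff₀ hp).mp hm
      linarith
    have h1 := key2 m 1 g (by push_cast; linarith)
    obtain ⟨k, hk⟩ := exists_int_lt ((g : ℝ) / p)
    have hlb : (k : ℝ) * p ≤ (g : ℝ) := by
      have := (lt_div_iff₀ hp).mp hk
      linarith
    have h2 := key k 1 g (by push_cast; linarith)
    rw [hrz] at h1 h2
    push_cast at h1 h2
    linarith
  · -- r > 0 case
    have hle : (η g : ℝ) ≤ (r : ℝ) * (g : ℝ) := by
      by_contra hcon
      push_neg at hcon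
      have hlt : (g : ℝ) / p < (η g : ℝ) / ((r : ℝ) * p) := by
        rw [div_lt_div_iff₀ hp hr]
        nlinarith
      obtain ⟨q, hq1, hq2⟩ := exists_rat_btwn hlt
      have hqc : (q : ℝ) = (q.num : ℝ) / (q.den : ℝ) := by rw [Rat.cast_def]
      have hd : (0 : ℝ) < (q.den : ℝ) := by exact_mod_cast q.pos
      have hA : (g : ℝ) < (q.num : ℝ) / (q.den : ℝ) * p := by
        have := (div_lt_iff₀ hp).mp hq1
        rw [hqc] at this
        linarith
      have hng : ((q.den : ℤ) : ℝ) * (g : ℝ) ≤ (q.num : ℝ) * p := by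
        rw [div_mul_eq_mul_div, lt_div_iff₀ hd] at hA
        push_cast
        nlinarith
      have h2 := key2 q.num (q.den : ℤ) g hng
      push_cast at h2
      have hB : (q.num : ℝ) / (q.den : ℝ) * ((r : ℝ) * p) < (η g : ℝ) := by
        have := (lt_div_iff₀ hr).mp hq2
        rw [hqc] at this
        linarith
      rw [div_mul_eq_mul_div, div_lt_iff₀ hd] at hB
      nlinarith
    have hge : (r : ℝ) * (g : ℝ) ≤ (η g : ℝ) := by
      by_contra hcon
      push_neg at hcon
      have hlt : (η g : ℝ) / ((r : ℝ) * p) < (g : ℝ) / p := by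
        rw [div_lt_div_iff₀ hr hp]
        nlinarith
      obtain ⟨q, hq1, hq2⟩ := exists_rat_btwn hlt
      have hqc : (q : ℝ) = (q.num : ℝ) / (q.den : ℝ) := by rw [Rat.cast_def]
      have hd : (0 : ℝ) < (q.den : ℝ) := by exact_mod_cast q.pos
      have hA : (q.num : ℝ) / (q.den : ℝ) * p < (g : ℝ) := by
        have := (lt_div_iff₀ hp).mp hq2
        rw [hqc] at this
        linarith
      have hng : (q.num : ℝ) * p ≤ ((q.den : ℤ) : ℝ) * (g : ℝ) := by
        rw [div_mul_eq_mul_div, div_lt_iff₀ hd] at hA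
        push_cast
        nlinarith
      have h2 := key q.num (q.den : ℤ) g hng
      push_cast at h2
      have hB : (η g : ℝ) < (q.num : ℝ) / (q.den : ℝ) * ((r : ℝ) * p) := by
        have := (div_lt_iff₀ hr).mp hq1
        rw [hqc] at this
        linarith
      rw [div_mul_eq_mul_div, lt_div_iff₀ hd] at hB
      nlinarith
    linarith
end
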